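/- (Frisch–Waugh–Lovell Theorem) Let (β̂1', β̂2')' = (X'X)^{-1}X'Y be the OLS coefficients from regressing Y on X = (X1, X2). Let Ỹ = (I-H1)Y and X̃2 = (I-H1)X2 with H1 = X1(X1'X1)^{-1}X1', and let β̃2 = (X̃2'X̃2)^{-1}X̃2'Ỹ. Then β̂2 = β̃2. -/

import Mathlib

open Matrix

theorem stmt_4 {n K L : ℕ}
    (X1 : Matrix (Fin n) (Fin K) ℝ) (X2 : Matrix (Fin n) (Fin L) ℝ) (Y : Fin n → ℝ)
    (X : Matrix (Fin n) (Fin K ⊕ Fin L) ℝ) (hX : X = Matrix.fromCols X1 X2)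
    (H1 : Matrix (Fin n) (Fin n) ℝ) (hH1 : H1 = X1 * (X1ᵀ * X1)⁻¹ * X1ᵀ)
    (X2t : Matrix (Fin n) (Fin L) ℝ) (hX2t : X2t = (1 - H1) * X2)
    (Yt : Fin n → ℝ) (hYt : Yt = (1 - H1) *ᵥ Y)
    (betaHat : (Fin K ⊕ Fin L) → ℝ) (hbetaHat : betaHat = (Xᵀ * X)⁻¹ *ᵥ (Xᵀ *ᵥ Y))
    (betaTilde2 : Fin L → ℝ) (hbetaTilde2 : betaTilde2 = (X2tᵀ * X2t)⁻¹ *ᵥ (X2tᵀ *ᵥ Yt))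
    (hGX : IsUnit (Xᵀ * X)) (hG1 : IsUnit (X1ᵀ * X1)) (hG2 : IsUnit (X2tᵀ * X2t)) :
    (fun l => betaHat (Sum.inr l)) = betaTilde2 := by
  have hdX : IsUnit (Xᵀ * X).det := (Matrix.isUnit_iff_isUnit_det _).mp hGX
  have hd1 : IsUnit (X1ᵀ * X1).det := (Matrix.isUnit_iff_isUnit_det _).mp hG1
  have hd2 : IsUnit (X2tᵀ * X2t).det := (Matrix.isUnit_iff_isUnit_det _).mp hG2
  -- symmetry of M = 1 - H1
  have hH1T : H1ᵀ = H1 := by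
    rw [hH1]
    rw [Matrix.transpose_mul, Matrix.transpose_mul, Matrix.transpose_transpose,
      Matrix.transpose_nonsing_inv, Matrix.transpose_mul, Matrix.transpose_transpose,
      Matrix.mul_assoc]
  have hMT : (1 - H1)ᵀ = 1 - H1 := by rw [Matrix.transpose_sub, Matrix.transpose_one, hH1T]
  -- idempotence
  have hH1X1 : H1 * X1 = X1 := by
    rw [hH1]
    simp only [Matrix.mul_assoc]
    rw [Matrix.nonsing_inv_mul _ hd1, Matrix.mul_one]
  have hX1TH1 : X1ᵀ * H1 = X1ᵀ := by
    calc X1ᵀ * H1 = (H1ᵀ * X1)ᵀ := by rw [Matrix.transpose_mul, Matrix.transpose_transpose]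
    _ = X1ᵀ := by rw [hH1T, hH1X1]
  have hHH : H1 * H1 = H1 := by
    nth_rewrite 1 [hH1]
    rw [Matrix.mul_assoc, hX1TH1]
    exact hH1.symm
  have hMM : (1 - H1) * (1 - H1) = 1 - H1 := by
    simp only [Matrix.sub_mul, Matrix.mul_sub, Matrix.one_mul, Matrix.mul_one, hHH]
    abel
  set M := (1 : Matrix (Fin n) (Fin n) ℝ) - H1 with hM
  -- the reduced Gram identities
  have hX2tT : X2tᵀ = X2ᵀ * M := by rw [hX2t, Matrix.transpose_mul, hMT]
  have hGram : X2tᵀ * X2t = X2ᵀ * M * X2 := by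
    rw [hX2tT, hX2t, Matrix.mul_assoc, ← Matrix.mul_assoc M, hMM, ← Matrix.mul_assoc]
  have hRHS : X2tᵀ *ᵥ Yt = (X2ᵀ * M) *ᵥ Y := by
    rw [hX2tT, hYt, Matrix.mulVec_mulVec, Matrix.mul_assoc, hMM]
  -- normal equations
  set b1 : Fin K → ℝ := fun k => betaHat (Sum.inl k) with hb1
  set b2 : Fin L → ℝ := fun l => betaHat (Sum.inr l) with hb2
  have hbelim : betaHat = Sum.elim b1 b2 := by
    funext i; cases i <;> rfl
  have hnormal : (Xᵀ * X) *ᵥ betaHat = Xᵀ *ᵥ Y := by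
    rw [hbetaHat, Matrix.mulVec_mulVec, Matrix.mul_nonsing_inv _ hdX, Matrix.one_mulVec]
  have hXb : X *ᵥ betaHat = X1 *ᵥ b1 + X2 *ᵥ b2 := by
    rw [hbelim, hX, Matrix.fromCols_mulVec_sumElim]
  have hnormal' : Xᵀ *ᵥ (X1 *ᵥ b1 + X2 *ᵥ b2) = Xᵀ *ᵥ Y := by
    rw [← hXb, Matrix.mulVec_mulVec, hnormal]
  have hXT : Xᵀ = Matrix.fromRows X1ᵀ X2ᵀ := by rw [hX, Matrix.transpose_fromCols]
  have eq1 : X1ᵀ *ᵥ (X1 *ᵥ b1 + X2 *ᵥ b2) = X1ᵀ *ᵥ Y := by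
    funext k
    have h := congrFun hnormal' (Sum.inl k)
    simpa [hXT, Matrix.fromRows_mulVec] using h
  have eq2 : X2ᵀ *ᵥ (X1 *ᵥ b1 + X2 *ᵥ b2) = X2ᵀ *ᵥ Y := by
    funext l
    have h := congrFun hnormal' (Sum.inr l)
    simpa [hXT, Matrix.fromRows_mulVec] using h
  -- solve for X1 *ᵥ b1
  have hb1eq : X1 *ᵥ b1 = H1 *ᵥ (Y - X2 *ᵥ b2) := by
    have h1 : (X1ᵀ * X1) *ᵥ b1 = X1ᵀ *ᵥ (Y - X2 *ᵥ b2) := by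
      rw [← Matrix.mulVec_mulVec, Matrix.mulVec_sub, ← eq1, Matrix.mulVec_add]
      abel
    have h2 : b1 = (X1ᵀ * X1)⁻¹ *ᵥ (X1ᵀ *ᵥ (Y - X2 *ᵥ b2)) := by
      rw [← h1, Matrix.mulVec_mulVec, Matrix.nonsing_inv_mul _ hd1, Matrix.one_mulVec]
    rw [h2, hH1, Matrix.mulVec_mulVec, Matrix.mulVec_mulVec, Matrix.mul_assoc]
  -- key equation: (X2ᵀ M X2) b2 = (X2ᵀ M) Y
  have hkey : (X2ᵀ * M * X2) *ᵥ b2 = (X2ᵀ * M) *ᵥ Y := by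
    have expand : X1 *ᵥ b1 + X2 *ᵥ b2 = H1 *ᵥ Y + M *ᵥ (X2 *ᵥ b2) := by
      rw [hb1eq, Matrix.mulVec_sub, hM, Matrix.sub_mulVec, Matrix.one_mulVec]
      abel
    have e2 : X2ᵀ *ᵥ (H1 *ᵥ Y + M *ᵥ (X2 *ᵥ b2)) = X2ᵀ *ᵥ Y := by
      rw [← expand, eq2]
    have : X2ᵀ *ᵥ (M *ᵥ (X2 *ᵥ b2)) = X2ᵀ *ᵥ Y - X2ᵀ *ᵥ (H1 *ᵥ Y) := by
      rw [← e2, Matrix.mulVec_add]; abel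
    rw [← Matrix.mulVec_mulVec, ← Matrix.mulVec_mulVec, this, hM, Matrix.mul_sub,
      Matrix.mul_one, Matrix.sub_mulVec, Matrix.mulVec_mulVec]
  -- finish
  rw [hbetaTilde2, hRHS, ← hkey, ← hGram, Matrix.mulVec_mulVec,
    Matrix.nonsing_inv_mul _ hd2, Matrix.one_mulVec]
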